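/- (Proposition 2.24, eq. (2.32): det_∞(s/(2π) − Φ_2/(2π)) = Γ_ℂ(s−1)^{-b_2}.) For every positive integer b and every real number s with 0 < s < 1, one has Complex.exp( − deriv (fun z : ℂ => (b : ℂ) * (2*π)^z * ( ζ_H(s, z) + ((s : ℂ) − 1)^(−z) )) 0 ) = ( (2*π)^((s : ℂ) − 1) / Γ((s : ℂ) − 1) )^b, where ((s : ℂ) − 1)^(−z) is the principal-branch complex power (Complex.cpow) of the nonzero complex number s − 1 ∈ (−1, 0). (Here Φ_2 has spectrum {n ∈ ℤ : n ≤ 1}, each eigenvalue of multiplicity b, and the right-hand side equals Γ_ℂ(s−1)^{-b}.) -/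

import Mathlib

open HurwitzZeta Complex

noncomputable section LerchAux

open Filter Set Topology

local notation "γ" => Real.eulerMascheroniConstant
/-- `P w x = x ^ w` for positive real `x`, written via `exp`. -/
def P (w : ℂ) (x : ℝ) : ℂ := Complex.exp (w * (Real.log x : ℂ))

lemma norm_P (w : ℂ) {x : ℝ} (hx : 0 < x) : ‖P w x‖ = x ^ w.re := by
  rw [P, Complex.norm_exp, Real.rpow_def_of_pos hx]
  congr 1
  simp [Complex.mul_re, mul_comm]

lemma P_sub_one {w : ℂ} {x : ℝ} (hx : 0 < x) : P (w - 1) x = P w x * (x : ℂ)⁻¹ := by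
  rw [P, P, sub_mul, one_mul, Complex.exp_sub]
  congr 1
  rw [← Complex.ofReal_exp, Real.exp_log hx]

lemma P_zero (x : ℝ) : P 0 x = 1 := by simp [P]

lemma hasDerivAt_P_base (w : ℂ) {x : ℝ} (hx : 0 < x) :
    HasDerivAt (fun x : ℝ => P w x) (w * P (w - 1) x) x := by
  have h1 : HasDerivAt (fun x : ℝ => ((Real.log x : ℝ) : ℂ)) (↑(x⁻¹) : ℂ) x :=
    (Real.hasDerivAt_log hx.ne').ofReal_comp
  have h2 := (h1.const_mul w).cexp
  refine h2.congr_deriv ?_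
  rw [P_sub_one hx, P]
  push_cast
  ring

lemma hasDerivAt_P_exp (c : ℂ) (x : ℝ) (z : ℂ) :
    HasDerivAt (fun z : ℂ => P (c * z) x) (c * (Real.log x : ℂ) * P (c * z) x) z := by
  have h1 : HasDerivAt (fun z : ℂ => c * z * (Real.log x : ℂ))
      (c * (Real.log x : ℂ)) z := by
    simpa using ((hasDerivAt_id z).const_mul c).mul_const ((Real.log x : ℂ))
  have := h1.cexp
  refine this.congr_deriv ?_
  rw [P]
  ring

/-- Second-order Taylor/MVT bound. -/
lemma mvt2 {f f' f'' : ℝ → ℂ} {a C : ℝ} (ha0 : 0 ≤ a) (ha1 : a ≤ 1) (hC : 0 ≤ C)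
    (hf : ∀ t ∈ Icc (0:ℝ) a, HasDerivAt f (f' t) t)
    (hf' : ∀ t ∈ Icc (0:ℝ) a, HasDerivAt f' (f'' t) t)
    (hbound : ∀ t ∈ Icc (0:ℝ) a, ‖f'' t‖ ≤ C) :
    ‖f a - f 0 - a * f' 0‖ ≤ C := by
  have h1 : ∀ t ∈ Icc (0:ℝ) a, ‖f' t - f' 0‖ ≤ C * (t - 0) := by
    refine norm_image_sub_le_of_norm_deriv_le_segment'
      (fun t ht => (hf' t ht).hasDerivWithinAt) (fun t ht => hbound t (Ico_subset_Icc_self ht)) 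
  set ψ : ℝ → ℂ := fun t => f t - (t : ℂ) * f' 0 with hψ
  have h2 : ∀ t ∈ Icc (0:ℝ) a, HasDerivWithinAt ψ (f' t - f' 0) (Icc 0 a) t := by
    intro t ht
    have : HasDerivAt (fun t : ℝ => (t : ℂ) * f' 0) (f' 0) t := by
      simpa using (Complex.ofRealCLM.hasDerivAt (x := t)).mul_const (f' 0)
    exact ((hf t ht).sub this).hasDerivWithinAt
  have h3 : ∀ t ∈ Ico (0:ℝ) a, ‖f' t - f' 0‖ ≤ C * a := by
    intro t ht
    calc ‖f' t - f' 0‖ ≤ C * (t - 0) := h1 t (Ico_subset_Icc_self ht)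
    _ ≤ C * a := by nlinarith [ht.2, ht.1]
  have h4 := norm_image_sub_le_of_norm_deriv_le_segment' h2 h3 a (by simp [ha0])
  have h5 : f a - f 0 - a * f' 0 = ψ a - ψ 0 := by simp [hψ]; ring
  rw [h5]
  calc ‖ψ a - ψ 0‖ ≤ C * a * (a - 0) := h4
  _ = C * (a * a) := by ring
  _ ≤ C * 1 := by
        have haa : a * a ≤ 1 := by nlinarith
        exact mul_le_mul_of_nonneg_left haa hC
  _ = C := mul_one C

/-- summand of the auxiliary series -/
def g (a k : ℝ) (z : ℂ) : ℂ := P (-z) (k + a) - P (-z) k + z * a * P (-z - 1) k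

/-- its `z`-derivative -/
def gd (a k : ℝ) (z : ℂ) : ℂ :=
  -(Real.log (k + a) : ℂ) * P (-z) (k + a) + (Real.log k : ℂ) * P (-z) k
    + a * P (-z - 1) k - z * a * (Real.log k : ℂ) * P (-z - 1) k

lemma hasDerivAt_P_neg (x : ℝ) (z : ℂ) :
    HasDerivAt (fun z : ℂ => P (-z) x) (-(Real.log x : ℂ) * P (-z) x) z := by
  have h1 : HasDerivAt (fun z : ℂ => -z * (Real.log x : ℂ)) (-(Real.log x : ℂ)) z := by
    simpa using (hasDerivAt_id z).neg.mul_const ((Real.log x : ℂ))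
  have := h1.cexp
  refine this.congr_deriv ?_
  rw [P]; ring

lemma hasDerivAt_P_neg_sub (x : ℝ) (z : ℂ) :
    HasDerivAt (fun z : ℂ => P (-z - 1) x) (-(Real.log x : ℂ) * P (-z - 1) x) z := by
  have h1 : HasDerivAt (fun z : ℂ => (-z - 1) * (Real.log x : ℂ)) (-(Real.log x : ℂ)) z := by
    simpa using ((hasDerivAt_id z).neg.sub_const (1 : ℂ)).mul_const ((Real.log x : ℂ))
  have := h1.cexp
  refine this.congr_deriv ?_
  rw [P]; ring

lemma hasDerivAt_g (a k : ℝ) (z : ℂ) : HasDerivAt (g a k) (gd a k z) z := by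
  have h3 : HasDerivAt (fun z : ℂ => z * (a : ℂ) * P (-z - 1) k)
      ((a : ℂ) * P (-z - 1) k + z * a * (-(Real.log k : ℂ) * P (-z - 1) k)) z := by
    simpa using ((hasDerivAt_id z).mul_const (a : ℂ)).fun_mul (hasDerivAt_P_neg_sub k z)
  have := ((hasDerivAt_P_neg (k + a) z).fun_sub (hasDerivAt_P_neg k z)).fun_add h3
  refine this.congr_deriv ?_
  rw [gd]; ring

lemma g_eq_taylor (a k : ℝ) (z : ℂ) :
    g a k z = P (-z) (k + a) - P (-z) (k + 0) - a * (-z * P (-z - 1) (k + 0)) := by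
  rw [g, add_zero]; ring

lemma gd_eq_taylor (a k : ℝ) (z : ℂ) :
    gd a k z = (-(Real.log (k + a) : ℂ) * P (-z) (k + a))
      - (-(Real.log (k + 0) : ℂ) * P (-z) (k + 0))
      - a * ((z * (Real.log (k + 0) : ℂ) - 1) * P (-z - 1) (k + 0)) := by
  rw [gd, add_zero]; ring

lemma hasDerivAt_t_P {k : ℝ} (z : ℂ) {t : ℝ} (h : 0 < k + t) :
    HasDerivAt (fun t : ℝ => P (-z) (k + t)) (-z * P (-z - 1) (k + t)) t :=
  (hasDerivAt_P_base (-z) h).comp_const_add k t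

lemma hasDerivAt_t_P' {k : ℝ} (z : ℂ) {t : ℝ} (h : 0 < k + t) :
    HasDerivAt (fun t : ℝ => -z * P (-z - 1) (k + t))
      (-z * (-z - 1) * P (-z - 2) (k + t)) t := by
  have := ((hasDerivAt_P_base (-z - 1) h).comp_const_add k t).const_mul (-z)
  refine this.congr_deriv ?_
  have h2 : (-z - 2 : ℂ) = -z - 1 - 1 := by ring
  rw [h2]; ring

lemma hasDerivAt_t_log {k : ℝ} {t : ℝ} (h : 0 < k + t) :
    HasDerivAt (fun t : ℝ => ((Real.log (k + t) : ℝ) : ℂ)) (((k + t)⁻¹ : ℝ) : ℂ) t :=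
  ((Real.hasDerivAt_log h.ne').comp_const_add k t).ofReal_comp

lemma hasDerivAt_t_Q {k : ℝ} (z : ℂ) {t : ℝ} (h : 0 < k + t) :
    HasDerivAt (fun t : ℝ => -(Real.log (k + t) : ℂ) * P (-z) (k + t))
      ((z * (Real.log (k + t) : ℂ) - 1) * P (-z - 1) (k + t)) t := by
  have := ((hasDerivAt_t_log h).fun_neg.fun_mul (hasDerivAt_t_P z h))
  refine this.congr_deriv ?_
  rw [P_sub_one h]
  push_cast
  ring

lemma hasDerivAt_t_Q' {k : ℝ} (z : ℂ) {t : ℝ} (h : 0 < k + t) :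
    HasDerivAt (fun t : ℝ => (z * (Real.log (k + t) : ℂ) - 1) * P (-z - 1) (k + t))
      ((z - (z + 1) * (z * (Real.log (k + t) : ℂ) - 1)) * P (-z - 2) (k + t)) t := by
  have h1 : HasDerivAt (fun t : ℝ => z * (Real.log (k + t) : ℂ) - 1)
      (z * ((k + t)⁻¹ : ℝ)) t := ((hasDerivAt_t_log h).const_mul z).sub_const 1
  have h2 : HasDerivAt (fun t : ℝ => P (-z - 1) (k + t))
      ((-z - 1) * P (-z - 1 - 1) (k + t)) t :=
    (hasDerivAt_P_base (-z - 1) h).comp_const_add k t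
  have := h1.fun_mul h2
  refine this.congr_deriv ?_
  have hp : P (-z - 1 - 1) (k + t) = P (-z - 1) (k + t) * ((k + t : ℝ) : ℂ)⁻¹ :=
    P_sub_one h
  rw [show (-z - 2 : ℂ) = -z - 1 - 1 by ring, hp]
  push_cast
  ring

/-- uniform bound for the exponent-(-z-2) power factor -/
lemma P_factor_bound {k t : ℝ} (hk : 1 ≤ k) (ht : 0 ≤ t) {z : ℂ} (hre : -(1/2 : ℝ) ≤ z.re) :
    ‖P (-z - 2) (k + t)‖ ≤ k ^ (-(3/2 : ℝ)) := by
  have hkt : (0:ℝ) < k + t := by linarith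
  rw [norm_P _ hkt]
  have h1 : (k + t) ^ (-z - 2).re ≤ k ^ (-z - 2).re := by
    apply Real.rpow_le_rpow_of_nonpos (by linarith) (by linarith)
    simp only [sub_re, neg_re, ofReal_re]
    norm_num
    linarith
  refine h1.trans ?_
  apply Real.rpow_le_rpow_of_exponent_le hk
  simp only [sub_re, neg_re]
  norm_num
  linarith

lemma g_bound {a k : ℝ} (ha0 : 0 ≤ a) (ha1 : a ≤ 1) (hk : 1 ≤ k) {z : ℂ} {R : ℝ}
    (hre : -(1/2 : ℝ) ≤ z.re) (hz : ‖z‖ ≤ R) :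
    ‖g a k z‖ ≤ R * (R + 1) * k ^ (-(3/2 : ℝ)) := by
  have hR0 : 0 ≤ R := (norm_nonneg z).trans hz
  have hC : 0 ≤ R * (R + 1) * k ^ (-(3/2:ℝ)) := by positivity
  rw [g_eq_taylor]
  refine mvt2 (f := fun t => P (-z) (k + t)) (f' := fun t => -z * P (-z - 1) (k + t))
    (f'' := fun t => -z * (-z - 1) * P (-z - 2) (k + t)) ha0 ha1 hC ?_ ?_ ?_
  · exact fun t ht => hasDerivAt_t_P z (by linarith [ht.1])
  · exact fun t ht => hasDerivAt_t_P' z (by linarith [ht.1])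
  · intro t ht
    rw [norm_mul, norm_mul]
    have h1 := P_factor_bound hk ht.1 hre
    have h2 : ‖-z‖ ≤ R := by rwa [norm_neg]
    have h3 : ‖-z - 1‖ ≤ R + 1 := by
      calc ‖-z - 1‖ ≤ ‖-z‖ + ‖(1:ℂ)‖ := norm_sub_le _ _
      _ ≤ R + 1 := by rw [norm_neg, norm_one]; linarith
    have := mul_le_mul (mul_le_mul h2 h3 (norm_nonneg _) hR0) h1 (norm_nonneg _) (by positivity)
    exact this

lemma gd_bound {a k : ℝ} (ha0 : 0 ≤ a) (ha1 : a ≤ 1) (hk : 1 ≤ k) {z : ℂ} {R : ℝ}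
    (hre : -(1/2 : ℝ) ≤ z.re) (hz : ‖z‖ ≤ R) :
    ‖gd a k z‖ ≤ 2 * (R + 1)^2 * (1 + Real.log (k + 1)) * k ^ (-(3/2 : ℝ)) := by
  have hR0 : 0 ≤ R := (norm_nonneg z).trans hz
  have hlk1 : 0 ≤ Real.log (k + 1) := Real.log_nonneg (by linarith)
  have hC : 0 ≤ 2 * (R + 1)^2 * (1 + Real.log (k + 1)) * k ^ (-(3/2:ℝ)) := by positivity
  rw [gd_eq_taylor]
  refine mvt2 (f := fun t => -(Real.log (k + t) : ℂ) * P (-z) (k + t))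
    (f' := fun t => (z * (Real.log (k + t) : ℂ) - 1) * P (-z - 1) (k + t))
    (f'' := fun t => (z - (z + 1) * (z * (Real.log (k + t) : ℂ) - 1)) * P (-z - 2) (k + t))
    ha0 ha1 hC ?_ ?_ ?_
  · exact fun t ht => hasDerivAt_t_Q z (by linarith [ht.1])
  · exact fun t ht => hasDerivAt_t_Q' z (by linarith [ht.1])
  · intro t ht
    have hkt1 : (0:ℝ) < k + t := by linarith [ht.1]
    have hlog_le : Real.log (k + t) ≤ Real.log (k + 1) := by
      apply Real.log_le_log hkt1; linarith [ht.2]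
    have hlog0 : 0 ≤ Real.log (k + t) := Real.log_nonneg (by linarith [ht.1])
    rw [norm_mul]
    have h1 := P_factor_bound hk ht.1 hre
    have h2 : ‖z - (z + 1) * (z * (Real.log (k + t) : ℂ) - 1)‖
        ≤ 2 * (R + 1)^2 * (1 + Real.log (k + 1)) := by
      have e1 : ‖z - (z + 1) * (z * (Real.log (k + t) : ℂ) - 1)‖
          ≤ ‖z‖ + ‖z + 1‖ * (‖z‖ * Real.log (k + t) + 1) := by
        calc ‖z - (z + 1) * (z * (Real.log (k + t) : ℂ) - 1)‖
            ≤ ‖z‖ + ‖(z + 1) * (z * (Real.log (k + t) : ℂ) - 1)‖ := norm_sub_le _ _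
        _ ≤ ‖z‖ + ‖z + 1‖ * (‖z * (Real.log (k + t) : ℂ)‖ + ‖(1:ℂ)‖) := by
            rw [norm_mul]
            gcongr
            exact norm_sub_le _ _
        _ = ‖z‖ + ‖z + 1‖ * (‖z‖ * |Real.log (k + t)| + 1) := by
            rw [norm_mul, norm_one, Complex.norm_real, Real.norm_eq_abs]
        _ = ‖z‖ + ‖z + 1‖ * (‖z‖ * Real.log (k + t) + 1) := by
            rw [_root_.abs_of_nonneg hlog0]
      refine e1.trans ?_
      have hz1 : ‖z + 1‖ ≤ R + 1 := by
        calc ‖z + 1‖ ≤ ‖z‖ + ‖(1:ℂ)‖ := norm_add_le _ _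
        _ ≤ R + 1 := by rw [norm_one]; linarith
      have : ‖z‖ + ‖z + 1‖ * (‖z‖ * Real.log (k + t) + 1)
          ≤ R + (R + 1) * (R * Real.log (k + 1) + 1) := by
        have hb : ‖z‖ * Real.log (k + t) + 1 ≤ R * Real.log (k + 1) + 1 := by
          have := mul_le_mul hz hlog_le hlog0 hR0
          linarith
        have := mul_le_mul hz1 hb (by positivity) (by positivity)
        linarith
      refine this.trans ?_
      nlinarith [sq_nonneg R, sq_nonneg (R+1), hlk1, hR0]
    calc ‖z - (z + 1) * (z * (Real.log (k + t) : ℂ) - 1)‖ * ‖P (-z - 2) (k + t)‖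
        ≤ (2 * (R + 1)^2 * (1 + Real.log (k + 1))) * (k ^ (-(3/2:ℝ))) :=
          mul_le_mul h2 h1 (norm_nonneg _) (by positivity)
    _ = _ := by ring

lemma summable_aux {p : ℝ} (hp : 1 < p) : Summable (fun n : ℕ => ((n:ℝ) + 1) ^ (-p)) := by
  have h1 : Summable (fun n : ℕ => ((n:ℝ)) ^ (-p)) := Real.summable_nat_rpow.mpr (by linarith)
  have h2 := (summable_nat_add_iff 1).mpr h1
  refine h2.congr fun n => ?_
  push_cast
  rfl

lemma log_rpow_aux {k : ℝ} (hk : 1 ≤ k) :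
    (1 + Real.log (k + 1)) * k ^ (-(3/2 : ℝ)) ≤ 17 * k ^ (-(11/8 : ℝ)) := by
  have hk0 : (0:ℝ) < k := by linarith
  have h1 : Real.log (k + 1) ≤ 8 * (k + 1) ^ ((1:ℝ)/8) := by
    have := Real.log_le_rpow_div (by linarith : (0:ℝ) ≤ k + 1) (by norm_num : (0:ℝ) < 1/8)
    calc Real.log (k+1) ≤ (k+1) ^ ((1:ℝ)/8) / (1/8) := this
    _ = 8 * (k + 1) ^ ((1:ℝ)/8) := by ring
  have h2 : (k + 1 : ℝ) ^ ((1:ℝ)/8) ≤ 2 * k ^ ((1:ℝ)/8) := by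
    calc (k + 1 : ℝ) ^ ((1:ℝ)/8) ≤ (2 * k) ^ ((1:ℝ)/8) := by
          apply Real.rpow_le_rpow (by linarith) (by linarith) (by norm_num)
    _ = 2 ^ ((1:ℝ)/8) * k ^ ((1:ℝ)/8) := Real.mul_rpow (by norm_num) hk0.le
    _ ≤ 2 * k ^ ((1:ℝ)/8) := by
          have h3 : (2:ℝ) ^ ((1:ℝ)/8) ≤ 2 ^ (1:ℝ) := by
            apply Real.rpow_le_rpow_of_exponent_le one_le_two (by norm_num)
          have h4 : (0:ℝ) ≤ k ^ ((1:ℝ)/8) := Real.rpow_nonneg hk0.le _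
          rw [Real.rpow_one] at h3
          nlinarith
  have h5 : (1:ℝ) ≤ k ^ ((1:ℝ)/8) := Real.one_le_rpow hk (by norm_num)
  have h6 : 1 + Real.log (k + 1) ≤ 17 * k ^ ((1:ℝ)/8) := by nlinarith
  have h7 : (0:ℝ) ≤ k ^ (-(3/2:ℝ)) := Real.rpow_nonneg hk0.le _
  calc (1 + Real.log (k + 1)) * k ^ (-(3/2 : ℝ)) ≤ (17 * k ^ ((1:ℝ)/8)) * k ^ (-(3/2:ℝ)) := by
        apply mul_le_mul_of_nonneg_right h6 h7
  _ = 17 * k ^ (-(11/8 : ℝ)) := by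
        rw [mul_assoc, ← Real.rpow_add hk0]
        norm_num

def G (a : ℝ) (z : ℂ) : ℂ := ∑' n : ℕ, g a ((n:ℝ) + 1) z
def Gd (a : ℝ) (z : ℂ) : ℂ := ∑' n : ℕ, gd a ((n:ℝ) + 1) z

lemma g_summable {a : ℝ} (ha0 : 0 ≤ a) (ha1 : a ≤ 1) {z : ℂ} (hre : -(1/2:ℝ) ≤ z.re) :
    Summable (fun n : ℕ => g a ((n:ℝ) + 1) z) := by
  apply Summable.of_norm_bounded (((summable_aux (by norm_num : (1:ℝ) < 3/2))).mul_left
    (‖z‖ * (‖z‖ + 1)))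
  intro n
  exact g_bound ha0 ha1 (le_add_of_nonneg_left (Nat.cast_nonneg n)) hre le_rfl

lemma gd_summable {a : ℝ} (ha0 : 0 ≤ a) (ha1 : a ≤ 1) {z : ℂ} {R : ℝ}
    (hre : -(1/2:ℝ) ≤ z.re) (hz : ‖z‖ ≤ R) :
    Summable (fun n : ℕ => gd a ((n:ℝ) + 1) z) := by
  apply Summable.of_norm_bounded (((summable_aux (by norm_num : (1:ℝ) < 11/8))).mul_left
    (2 * (R + 1)^2 * 17))
  intro n
  have hk : (1:ℝ) ≤ (n:ℝ) + 1 := le_add_of_nonneg_left (Nat.cast_nonneg n)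
  have hR0 : (0:ℝ) ≤ R := (norm_nonneg z).trans hz
  calc ‖gd a ((n:ℝ)+1) z‖
      ≤ 2 * (R + 1)^2 * (1 + Real.log ((n:ℝ) + 1 + 1)) * ((n:ℝ)+1) ^ (-(3/2 : ℝ)) :=
        gd_bound ha0 ha1 hk hre hz
  _ = 2 * (R + 1)^2 * ((1 + Real.log ((n:ℝ) + 1 + 1)) * ((n:ℝ)+1) ^ (-(3/2 : ℝ))) := by ring
  _ ≤ 2 * (R + 1)^2 * (17 * ((n:ℝ)+1) ^ (-(11/8 : ℝ))) := by
        apply mul_le_mul_of_nonneg_left (log_rpow_aux hk) (by positivity)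
  _ = 2 * (R + 1)^2 * 17 * ((n:ℝ)+1) ^ (-(11/8 : ℝ)) := by ring

lemma G_hasDerivAt {a : ℝ} (ha0 : 0 < a) (ha1 : a ≤ 1) {z₀ : ℂ} (hz₀ : -(1/2:ℝ) < z₀.re) :
    HasDerivAt (G a) (Gd a z₀) z₀ := by
  set R : ℝ := ‖z₀‖ + 1 with hR
  have hR1 : (0:ℝ) ≤ R := by positivity
  set S : Set ℂ := {z | -(1/2:ℝ) < z.re} ∩ {z | ‖z‖ < R} with hS
  have hSopen : IsOpen S :=
    (isOpen_lt continuous_const Complex.continuous_re).inter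
      (isOpen_lt continuous_norm continuous_const)
  have hz₀S : z₀ ∈ S := ⟨hz₀, by simp [hR]⟩
  have hu' : Summable (fun n : ℕ => 2 * (R + 1)^2 * 17 * ((n:ℝ)+1) ^ (-(11/8 : ℝ))) :=
    ((summable_aux (by norm_num : (1:ℝ) < 11/8))).mul_left _
  have hunif : TendstoUniformlyOn
      (fun N (z : ℂ) => ∑ n ∈ Finset.range N, gd a ((n:ℝ) + 1) z)
      (fun z => ∑' n : ℕ, gd a ((n:ℝ) + 1) z) atTop S := by
    apply tendstoUniformlyOn_tsum_nat hu'
    intro n z hz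
    have hk : (1:ℝ) ≤ (n:ℝ) + 1 := le_add_of_nonneg_left (Nat.cast_nonneg n)
    calc ‖gd a ((n:ℝ)+1) z‖
        ≤ 2 * (R + 1)^2 * (1 + Real.log ((n:ℝ) + 1 + 1)) * ((n:ℝ)+1) ^ (-(3/2 : ℝ)) :=
          gd_bound ha0.le ha1 hk hz.1.le hz.2.le
    _ = 2 * (R + 1)^2 * ((1 + Real.log ((n:ℝ) + 1 + 1)) * ((n:ℝ)+1) ^ (-(3/2 : ℝ))) := by ring
    _ ≤ 2 * (R + 1)^2 * (17 * ((n:ℝ)+1) ^ (-(11/8 : ℝ))) := by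
          apply mul_le_mul_of_nonneg_left (log_rpow_aux hk) (by positivity)
    _ = 2 * (R + 1)^2 * 17 * ((n:ℝ)+1) ^ (-(11/8 : ℝ)) := by ring
  have := hasDerivAt_of_tendstoUniformlyOn hSopen hunif
    (Eventually.of_forall fun N z _ =>
      HasDerivAt.fun_sum fun n _ => hasDerivAt_g a ((n:ℝ) + 1) z)
    (fun z hz => ((g_summable ha0.le ha1 hz.1.le).hasSum.tendsto_sum_nat)) hz₀S
  exact this

lemma G_zero {a : ℝ} : G a 0 = 0 := by
  rw [G]
  convert tsum_zero with n
  simp [g, P_zero]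

lemma P_neg_one {x : ℝ} (hx : 0 < x) : P (-1) x = (x : ℂ)⁻¹ := by
  have := P_sub_one (w := 0) hx
  rw [zero_sub] at this
  rw [this, P_zero, one_mul]

lemma gd_zero_eq {a k : ℝ} (hk : 0 < k) :
    gd a k 0 = ((Real.log k - Real.log (k + a) + a * k⁻¹ : ℝ) : ℂ) := by
  have h1 : P (-0 - 1) k = (k : ℂ)⁻¹ := by rw [show (-0-1 : ℂ) = -1 by ring, P_neg_one hk]
  rw [gd, h1, show (-0 : ℂ) = 0 by ring, P_zero, P_zero]
  push_cast
  ring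

lemma P_eq_cpow {x : ℝ} (hx : 0 < x) (z : ℂ) : P (-z) x = 1 / (x : ℂ) ^ z := by
  rw [cpow_def_of_ne_zero (ofReal_ne_zero.mpr hx.ne'), P, Complex.ofReal_log hx.le,
    one_div, ← Complex.exp_neg]
  congr 1
  ring

/-- The `RHS` of the analytic continuation identity. -/
def RHS (a : ℝ) (z : ℂ) : ℂ :=
  P (-z) a + riemannZeta z - a * z * riemannZeta (z + 1) + G a z

lemma identity_re_gt_one {a : ℝ} (ha0 : 0 < a) (ha1 : a ≤ 1) {z : ℂ} (hz : 1 < z.re) :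
    hurwitzZeta (a : UnitAddCircle) z = RHS a z := by
  have hz1 : 1 < (z + 1).re := by simp only [add_re, one_re]; linarith
  have hH := hasSum_hurwitzZeta_of_one_lt_re (a := a) ⟨ha0.le, ha1⟩ hz
  have hA : HasSum (fun n : ℕ => 1 / ((↑(n + 1) : ℂ) + (a : ℂ)) ^ z)
      (hurwitzZeta (a : UnitAddCircle) z - ∑ i ∈ Finset.range 1, 1 / ((i : ℂ) + (a : ℂ)) ^ z) :=
    (hasSum_nat_add_iff' 1).mpr hH
  have hsB : Summable (fun n : ℕ => 1 / ((n : ℂ) + 1) ^ z) := by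
    have h0 := (Complex.summable_one_div_nat_cpow (p := z)).mpr hz
    have h1 := (summable_nat_add_iff 1).mpr h0
    refine h1.congr fun n => ?_
    push_cast
    rfl
  have hB : HasSum (fun n : ℕ => 1 / ((n : ℂ) + 1) ^ z) (riemannZeta z) := by
    have := hsB.hasSum
    rwa [← zeta_eq_tsum_one_div_nat_add_one_cpow hz] at this
  have hsC : Summable (fun n : ℕ => 1 / ((n : ℂ) + 1) ^ (z + 1)) := by
    have h0 := (Complex.summable_one_div_nat_cpow (p := z + 1)).mpr hz1
    have h1 := (summable_nat_add_iff 1).mpr h0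
    refine h1.congr fun n => ?_
    push_cast
    rfl
  have hC : HasSum (fun n : ℕ => 1 / ((n : ℂ) + 1) ^ (z + 1)) (riemannZeta (z + 1)) := by
    have := hsC.hasSum
    rwa [← zeta_eq_tsum_one_div_nat_add_one_cpow hz1] at this
  have hG : HasSum (fun n : ℕ => g a ((n:ℝ) + 1) z)
      ((hurwitzZeta (a : UnitAddCircle) z - ∑ i ∈ Finset.range 1, 1 / ((i : ℂ) + (a : ℂ)) ^ z
        - riemannZeta z) + (z * a) * riemannZeta (z + 1)) := by
    refine ((hA.sub hB).add (hC.mul_left (z * (a : ℂ)))).congr_fun fun n => ?_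
    have hx1 : (0:ℝ) < (n:ℝ) + 1 := by positivity
    have hx2 : (0:ℝ) < (n:ℝ) + 1 + a := by positivity
    rw [g, P_eq_cpow hx2, P_eq_cpow hx1, show (-z - 1 : ℂ) = -(z+1) by ring,
      P_eq_cpow hx1 (z + 1)]
    push_cast
    ring
  have hGval : G a z = (hurwitzZeta (a : UnitAddCircle) z
      - ∑ i ∈ Finset.range 1, 1 / ((i : ℂ) + (a : ℂ)) ^ z
      - riemannZeta z) + (z * a) * riemannZeta (z + 1) := hG.tsum_eq
  have hsum0 : (∑ i ∈ Finset.range 1, 1 / ((i : ℂ) + (a : ℂ)) ^ z) = P (-z) a := by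
    rw [Finset.sum_range_one, P_eq_cpow ha0]
    norm_num
  rw [hsum0] at hGval
  rw [RHS, hGval]
  ring

lemma mem_W_aux {z : ℂ} (hz : ‖z‖ < 1/4) (hz0 : z ≠ 0) :
    z ∈ ({z : ℂ | 1 < z.re} ∪ ({z : ℂ | -(1/2:ℝ) < z.re} ∩ {z : ℂ | 0 < z.im})
      ∪ ({z : ℂ | -(1/2:ℝ) < z.re} ∩ {z : ℂ | z.im < 0})
      ∪ ({z : ℂ | 0 < z.re} ∩ {z : ℂ | z.re < 1})
      ∪ ({z : ℂ | -(1/2:ℝ) < z.re} ∩ {z : ℂ | z.re < 0})) := by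
  have hre : |z.re| < 1/4 := lt_of_le_of_lt (Complex.abs_re_le_norm z) hz
  have hre1 : -(1/2:ℝ) < z.re := by cases abs_lt.mp hre; linarith
  have hre2 : z.re < 1 := by cases abs_lt.mp hre; linarith
  rcases lt_trichotomy z.im 0 with him | him | him
  · exact Or.inl (Or.inl (Or.inr ⟨hre1, him⟩))
  · have hne : z.re ≠ 0 := by
      intro h
      exact hz0 (Complex.ext h him)
    rcases hne.lt_or_gt with h | h
    · exact Or.inr ⟨hre1, h⟩
    · exact Or.inl (Or.inr ⟨h, hre2⟩)
  · exact Or.inl (Or.inl (Or.inl (Or.inr ⟨hre1, him⟩)))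

lemma identity_near_zero {a : ℝ} (ha0 : 0 < a) (ha1 : a ≤ 1) {z : ℂ}
    (hz : ‖z‖ < 1/4) (hz0 : z ≠ 0) :
    hurwitzZeta (a : UnitAddCircle) z = RHS a z := by
  set V₁ : Set ℂ := {z : ℂ | 1 < z.re} with hV₁
  set V₂ : Set ℂ := {z : ℂ | -(1/2:ℝ) < z.re} ∩ {z : ℂ | 0 < z.im} with hV₂
  set V₃ : Set ℂ := {z : ℂ | -(1/2:ℝ) < z.re} ∩ {z : ℂ | z.im < 0} with hV₃
  set V₄ : Set ℂ := {z : ℂ | 0 < z.re} ∩ {z : ℂ | z.re < 1} with hV₄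
  set V₅ : Set ℂ := {z : ℂ | -(1/2:ℝ) < z.re} ∩ {z : ℂ | z.re < 0} with hV₅
  set W : Set ℂ := V₁ ∪ V₂ ∪ V₃ ∪ V₄ ∪ V₅ with hW
  have hWsub : W ⊆ {w : ℂ | w ≠ 0 ∧ w ≠ 1 ∧ -(1/2:ℝ) < w.re} := by
    intro w h
    simp only [hW, hV₁, hV₂, hV₃, hV₄, hV₅, mem_union, mem_inter_iff, mem_setOf_eq] at h
    refine ⟨fun he => ?_, fun he => ?_, ?_⟩
    · subst he
      norm_num [Complex.zero_re, Complex.zero_im] at h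
    · subst he
      norm_num [Complex.one_re, Complex.one_im] at h
    · rcases h with ((((h | h) | h) | h) | h)
      · linarith [h]
      · exact h.1
      · exact h.1
      · linarith [h.1]
      · exact h.1
  have hWopen : IsOpen W := by
    have h1 : IsOpen V₁ := isOpen_lt continuous_const Complex.continuous_re
    have h2 : IsOpen V₂ := (isOpen_lt continuous_const Complex.continuous_re).inter
      (isOpen_lt continuous_const Complex.continuous_im)
    have h3 : IsOpen V₃ := (isOpen_lt continuous_const Complex.continuous_re).inter
      (isOpen_lt Complex.continuous_im continuous_const)
    have h4 : IsOpen V₄ := (isOpen_lt continuous_const Complex.continuous_re).inter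
      (isOpen_lt Complex.continuous_re continuous_const)
    have h5 : IsOpen V₅ := (isOpen_lt continuous_const Complex.continuous_re).inter
      (isOpen_lt Complex.continuous_re continuous_const)
    exact (((h1.union h2).union h3).union h4).union h5
  have hpre : IsPreconnected W := by
    have c1 : Convex ℝ V₁ := convex_halfSpace_re_gt 1
    have c2 : Convex ℝ V₂ := (convex_halfSpace_re_gt _).inter (convex_halfSpace_im_gt 0)
    have c3 : Convex ℝ V₃ := (convex_halfSpace_re_gt _).inter (convex_halfSpace_im_lt 0)
    have c4 : Convex ℝ V₄ := (convex_halfSpace_re_gt 0).inter (convex_halfSpace_re_lt 1)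
    have c5 : Convex ℝ V₅ := (convex_halfSpace_re_gt _).inter (convex_halfSpace_re_lt 0)
    have m1 : (2 + I : ℂ) ∈ V₁ := by
      simp only [hV₁, mem_setOf_eq, Complex.add_re, Complex.I_re]
      norm_num
    have m2 : (2 + I : ℂ) ∈ V₂ := by
      simp only [hV₂, mem_inter_iff, mem_setOf_eq, Complex.add_re, Complex.add_im,
        Complex.I_re, Complex.I_im]
      norm_num
    have m3 : (2 - I : ℂ) ∈ V₁ := by
      simp only [hV₁, mem_setOf_eq, Complex.sub_re, Complex.I_re]
      norm_num
    have m4 : (2 - I : ℂ) ∈ V₃ := by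
      simp only [hV₃, mem_inter_iff, mem_setOf_eq, Complex.sub_re, Complex.sub_im,
        Complex.I_re, Complex.I_im]
      norm_num
    have m5 : (((1/2 : ℝ) : ℂ) + I) ∈ V₂ := by
      simp only [hV₂, mem_inter_iff, mem_setOf_eq, Complex.add_re, Complex.add_im,
        Complex.I_re, Complex.I_im, Complex.ofReal_re, Complex.ofReal_im]
      norm_num
    have m6 : (((1/2 : ℝ) : ℂ) + I) ∈ V₄ := by
      simp only [hV₄, mem_inter_iff, mem_setOf_eq, Complex.add_re,
        Complex.I_re, Complex.ofReal_re]
      norm_num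
    have m7 : (((-(1/4) : ℝ) : ℂ) + I) ∈ V₂ := by
      simp only [hV₂, mem_inter_iff, mem_setOf_eq, Complex.add_re, Complex.add_im,
        Complex.I_re, Complex.I_im, Complex.ofReal_re, Complex.ofReal_im]
      norm_num
    have m8 : (((-(1/4) : ℝ) : ℂ) + I) ∈ V₅ := by
      simp only [hV₅, mem_inter_iff, mem_setOf_eq, Complex.add_re,
        Complex.I_re, Complex.ofReal_re]
      norm_num
    have p12 : IsPreconnected (V₁ ∪ V₂) :=
      IsPreconnected.union (2 + I) m1 m2 c1.isPreconnected c2.isPreconnected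
    have p123 : IsPreconnected (V₁ ∪ V₂ ∪ V₃) :=
      IsPreconnected.union (2 - I) (Or.inl m3) m4 p12 c3.isPreconnected
    have p1234 : IsPreconnected (V₁ ∪ V₂ ∪ V₃ ∪ V₄) :=
      IsPreconnected.union (((1/2 : ℝ) : ℂ) + I) (Or.inl (Or.inr m5)) m6 p123
        c4.isPreconnected
    exact IsPreconnected.union (((-(1/4) : ℝ) : ℂ) + I) (Or.inl (Or.inl (Or.inr m7)))
      m8 p1234 c5.isPreconnected
  have hdiffL : DifferentiableOn ℂ (fun w => hurwitzZeta (a : UnitAddCircle) w) W :=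
    fun w hw => (differentiableAt_hurwitzZeta _ (hWsub hw).2.1).differentiableWithinAt
  have hdiffR : DifferentiableOn ℂ (RHS a) W := by
    intro w hw
    obtain ⟨hw0, hw1, hwre⟩ := hWsub hw
    apply DifferentiableAt.differentiableWithinAt
    apply DifferentiableAt.add
    apply DifferentiableAt.sub
    apply DifferentiableAt.add
    · exact ((differentiableAt_id.neg.mul_const ((Real.log a : ℂ))).cexp)
    · exact differentiableAt_riemannZeta hw1
    · apply DifferentiableAt.mul
      · exact (differentiableAt_const _).mul differentiableAt_id
      · have hne : w + (1:ℂ) ≠ 1 := by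
          intro hcon
          apply hw0
          have := congrArg (fun x => x - 1) hcon
          simpa using this
        exact (differentiableAt_riemannZeta hne).comp w (differentiableAt_id.add_const 1)
    · exact (G_hasDerivAt ha0 ha1 hwre).differentiableAt
  have hAnalL := hdiffL.analyticOnNhd hWopen
  have hAnalR := hdiffR.analyticOnNhd hWopen
  have h2W : (2 : ℂ) ∈ W := by
    left; left; left; left
    simp only [hV₁, mem_setOf_eq]
    norm_num
  have hev : (fun w => hurwitzZeta (a : UnitAddCircle) w) =ᶠ[𝓝 (2:ℂ)] RHS a := by
    have hmem : {w : ℂ | 1 < w.re} ∈ 𝓝 (2:ℂ) := by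
      apply (isOpen_lt continuous_const Complex.continuous_re).mem_nhds
      simp
    filter_upwards [hmem] with w hw
    exact identity_re_gt_one ha0 ha1 hw
  have hEq := hAnalL.eqOn_of_preconnected_of_eventuallyEq hAnalR hpre h2W hev
  exact hEq (mem_W_aux hz hz0)

lemma gamma_hasDerivAt_one : HasDerivAt Complex.Gamma ((-γ : ℝ) : ℂ) 1 := by
  have hne : ∀ m : ℕ, (1 : ℂ) ≠ -m := by
    intro m h
    have h2 := congrArg Complex.re h
    simp only [Complex.one_re, Complex.neg_re, Complex.natCast_re] at h2
    linarith [Nat.cast_nonneg (α := ℝ) m]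
  have hdiff := Complex.differentiableAt_Gamma 1 hne
  have hc : HasDerivAt Complex.Gamma (deriv Complex.Gamma 1) 1 := hdiff.hasDerivAt
  set c := deriv Complex.Gamma 1 with hcdef
  have hc' : HasDerivAt Complex.Gamma c ((1 : ℝ) : ℂ) := by rwa [Complex.ofReal_one]
  have h1 : HasDerivAt (fun x : ℝ => (Complex.Gamma (x : ℂ)).re) c.re 1 := hc'.real_of_complex
  have h1' : HasDerivAt Real.Gamma c.re 1 := by
    refine h1.congr_of_eventuallyEq (Eventually.of_forall fun x => ?_)
    simp [Complex.Gamma_ofReal]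
  have hre : c.re = -γ := h1'.unique Real.hasDerivAt_Gamma_one
  have h2 : HasDerivAt (fun z : ℂ => -I * Complex.Gamma z) (-I * c) ((1 : ℝ) : ℂ) :=
    hc'.const_mul (-I)
  have h3 : HasDerivAt (fun x : ℝ => ((-I) * Complex.Gamma (x : ℂ)).re) ((-I * c).re) 1 :=
    h2.real_of_complex
  have h4 : HasDerivAt (fun _ : ℝ => (0 : ℝ)) ((-I * c).re) 1 := by
    refine h3.congr_of_eventuallyEq (Eventually.of_forall fun x => ?_)
    simp [Complex.Gamma_ofReal, Complex.mul_re]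
  have him : c.im = 0 := by
    have h5 := h4.unique (hasDerivAt_const 1 (0:ℝ))
    simpa [Complex.mul_re] using h5
  have hcc : c = ((-γ : ℝ) : ℂ) := by
    apply Complex.ext
    · simpa using hre
    · simpa using him
  rwa [← hcc]

lemma zeta_eq_M {z : ℂ} (hz : ‖z‖ < 1) :
    riemannZeta z = (z * completedRiemannZeta₀ z - 1 - z / (1 - z)) *
      (Complex.exp (((Real.log Real.pi : ℝ) : ℂ) / 2 * z) *
        (2 * Complex.Gamma (z / 2 + 1))⁻¹) := by
  rcases eq_or_ne z 0 with rfl | hz0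
  · rw [riemannZeta_zero]
    simp [Complex.Gamma_one]
    norm_num
  · have hz1 : (1 : ℂ) - z ≠ 0 := by
      intro h
      have hzz : z = 1 := by linear_combination -h
      rw [hzz] at hz
      simp at hz
    have hz2 : z / 2 ≠ 0 := div_ne_zero hz0 two_ne_zero
    have hΓ2 : Complex.Gamma (z / 2) ≠ 0 := by
      apply Complex.Gamma_ne_zero
      intro m h
      have hz' : z = -2 * m := by linear_combination 2 * h
      rcases Nat.eq_zero_or_pos m with rfl | hm
      · apply hz0; rw [hz']; simp
      · rw [hz', norm_mul, Complex.norm_natCast, show ‖(-2:ℂ)‖ = 2 by norm_num] at hz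
        have h1 : (1:ℝ) ≤ m := by exact_mod_cast hm
        nlinarith
    have h4 : Complex.Gamma (z / 2 + 1) = (z / 2) * Complex.Gamma (z / 2) :=
      Complex.Gamma_add_one _ hz2
    have hpow : (↑Real.pi : ℂ) ^ (-z / 2) =
        Complex.exp (((Real.log Real.pi : ℝ) : ℂ) * (-z / 2)) := by
      rw [cpow_def_of_ne_zero (ofReal_ne_zero.mpr Real.pi_ne_zero),
        Complex.ofReal_log Real.pi_pos.le]
    have hEF : Complex.exp (((Real.log Real.pi : ℝ) : ℂ) * (-z / 2)) *
        Complex.exp (((Real.log Real.pi : ℝ) : ℂ) / 2 * z) = 1 := by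
      rw [← Complex.exp_add,
        show ((Real.log Real.pi : ℝ) : ℂ) * (-z / 2) + ((Real.log Real.pi : ℝ) : ℂ) / 2 * z
          = 0 by ring, Complex.exp_zero]
    rw [riemannZeta_def_of_ne_zero hz0, completedRiemannZeta_eq, Gammaℝ_def, hpow, h4]
    set E := Complex.exp (((Real.log Real.pi : ℝ) : ℂ) * (-z / 2)) with hE
    set F := Complex.exp (((Real.log Real.pi : ℝ) : ℂ) / 2 * z) with hF
    have hEne : E ≠ 0 := Complex.exp_ne_zero _
    have hFne : F ≠ 0 := Complex.exp_ne_zero _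
    have hFE : F = E⁻¹ := eq_inv_of_mul_eq_one_left (by rwa [mul_comm] at hEF)
    rw [hFE]
    field_simp

lemma zeta_hasDerivAt_zero :
    HasDerivAt riemannZeta (-((Real.log (2 * Real.pi) : ℝ) : ℂ) / 2) 0 := by
  set lp : ℂ := ((Real.log Real.pi : ℝ) : ℂ) with hlp
  -- derivative of the first factor
  have hN1 : HasDerivAt (fun z : ℂ => z * completedRiemannZeta₀ z)
      (completedRiemannZeta₀ 0) 0 := by
    have := (hasDerivAt_id (0:ℂ)).fun_mul (differentiable_completedZeta₀ 0).hasDerivAt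
    simpa using this
  have hN2 : HasDerivAt (fun z : ℂ => z / (1 - z)) 1 0 := by
    have h0 : (1:ℂ) - 0 ≠ 0 := by norm_num
    have := (hasDerivAt_id (0:ℂ)).fun_div (((hasDerivAt_id (0:ℂ)).const_sub 1)) h0
    simpa using this
  have hN : HasDerivAt (fun z : ℂ => z * completedRiemannZeta₀ z - 1 - z / (1 - z))
      (completedRiemannZeta₀ 0 - 1) 0 := by
    have := (hN1.sub_const 1).fun_sub hN2
    simpa using this
  -- derivative of the second factor
  have hR1 : HasDerivAt (fun z : ℂ => Complex.exp (lp / 2 * z)) (lp / 2) 0 := by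
    have := ((hasDerivAt_id (0:ℂ)).const_mul (lp / 2)).cexp
    simpa using this
  have hΓcomp : HasDerivAt (fun z : ℂ => Complex.Gamma (z / 2 + 1)) (((-γ : ℝ) : ℂ) / 2) 0 := by
    have hinner : HasDerivAt (fun z : ℂ => z / 2 + 1) (1 / 2) 0 := by
      simpa using ((hasDerivAt_id (0:ℂ)).div_const 2).add_const 1
    have h1 : HasDerivAt Complex.Gamma ((-γ : ℝ) : ℂ) ((0:ℂ) / 2 + 1) := by
      rw [show (0:ℂ)/2 + 1 = 1 by norm_num]
      exact gamma_hasDerivAt_one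
    have h3 := h1.comp 0 hinner
    have heq : (fun z : ℂ => Complex.Gamma (z / 2 + 1))
        = Complex.Gamma ∘ (fun z : ℂ => z / 2 + 1) := rfl
    rw [heq]
    refine h3.congr_deriv ?_
    push_cast
    ring
  have hR2 : HasDerivAt (fun z : ℂ => 2 * Complex.Gamma (z / 2 + 1)) (((-γ : ℝ) : ℂ)) 0 := by
    have := hΓcomp.const_mul (2:ℂ)
    refine this.congr_deriv ?_
    push_cast
    ring
  have hR2val : 2 * Complex.Gamma ((0:ℂ) / 2 + 1) = 2 := by
    rw [show (0:ℂ)/2 + 1 = 1 by norm_num, Complex.Gamma_one, mul_one]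
  have hRinv : HasDerivAt (fun z : ℂ => (2 * Complex.Gamma (z / 2 + 1))⁻¹)
      (((γ : ℝ) : ℂ) / 4) 0 := by
    have := hR2.fun_inv (by rw [hR2val]; norm_num)
    refine this.congr_deriv ?_
    rw [hR2val]
    push_cast
    ring
  have hR : HasDerivAt (fun z : ℂ => Complex.exp (lp / 2 * z) *
      (2 * Complex.Gamma (z / 2 + 1))⁻¹) (lp / 4 + ((γ : ℝ) : ℂ) / 4) 0 := by
    have := hR1.fun_mul hRinv
    refine this.congr_deriv ?_
    rw [hR2val]
    simp
    ring
  have hM := hN.fun_mul hR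
  -- value simplifications
  have hval : (completedRiemannZeta₀ 0 - 1) * (Complex.exp (lp / 2 * 0) *
        (2 * Complex.Gamma ((0:ℂ) / 2 + 1))⁻¹)
      + ((0:ℂ) * completedRiemannZeta₀ 0 - 1 - 0 / (1 - 0)) * (lp / 4 + ((γ : ℝ) : ℂ) / 4)
      = -((Real.log (2 * Real.pi) : ℝ) : ℂ) / 2 := by
    rw [hR2val]
    have h0 : completedRiemannZeta₀ 0 = (((γ : ℝ) : ℂ) - Complex.log (4 * Real.pi)) / 2 + 1 := by
      have := completedRiemannZeta₀_one_sub 1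
      rw [show (1:ℂ) - 1 = 0 by ring] at this
      rw [this, completedRiemannZeta₀_one]
    rw [h0]
    have hlog4 : Complex.log (4 * (Real.pi : ℂ)) = ((Real.log (4 * Real.pi) : ℝ) : ℂ) := by
      rw [show (4 : ℂ) * (Real.pi : ℂ) = ((4 * Real.pi : ℝ) : ℂ) by push_cast; ring,
        Complex.ofReal_log (by positivity)]
    rw [hlog4]
    have hlogid : Real.log (4 * Real.pi) + Real.log Real.pi = 2 * Real.log (2 * Real.pi) := by
      rw [← Real.log_mul (by positivity) Real.pi_ne_zero]
      rw [show (2:ℝ) * Real.log (2 * Real.pi) = Real.log ((2 * Real.pi)^2) by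
        rw [Real.log_pow]; push_cast; ring]
      congr 1
      ring
    simp only [mul_zero, Complex.exp_zero, one_mul, zero_mul, zero_sub, zero_div, sub_zero]
    have : ((Real.log (4 * Real.pi) : ℝ) : ℂ) + lp = 2 * ((Real.log (2 * Real.pi) : ℝ) : ℂ) := by
      rw [hlp]
      exact_mod_cast congrArg (Complex.ofReal) hlogid
    linear_combination (-1/4 : ℂ) * this
  rw [hval] at hM
  -- transfer from M to ζ
  refine hM.congr_of_eventuallyEq ?_
  filter_upwards [Metric.ball_mem_nhds (0:ℂ) one_pos] with w hw
  exact zeta_eq_M (by simpa [Metric.mem_ball] using hw)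

lemma harmonic_cast (N : ℕ) :
    ((harmonic N : ℚ) : ℝ) = ∑ n ∈ Finset.range N, (((n:ℝ) + 1))⁻¹ := by
  rw [harmonic]
  push_cast
  rfl

lemma T_eq {a : ℝ} (ha0 : 0 < a) {N : ℕ} (hN : 1 ≤ N) :
    ∑ n ∈ Finset.range N,
        (Real.log ((n:ℝ) + 1) - Real.log ((n:ℝ) + 1 + a) + a * ((n:ℝ) + 1)⁻¹)
      = Real.log (Real.GammaSeq a N) + Real.log a
        + a * (((harmonic N : ℚ) : ℝ) - Real.log N) := by
  have hN0 : (0:ℝ) < N := by exact_mod_cast hN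
  have hfact : ((Nat.factorial N : ℕ) : ℝ) = ∏ n ∈ Finset.range N, ((n:ℝ) + 1) := by
    rw [← Finset.prod_range_add_one_eq_factorial]
    push_cast
    rfl
  have hprodpos : (0:ℝ) < ∏ j ∈ Finset.range (N + 1), (a + (j:ℝ)) := by
    apply Finset.prod_pos
    intro j _
    positivity
  have hlogGS : Real.log (Real.GammaSeq a N)
      = a * Real.log N + ∑ n ∈ Finset.range N, Real.log ((n:ℝ) + 1)
        - (Real.log a + ∑ n ∈ Finset.range N, Real.log (a + ((n:ℝ) + 1))) := by
    rw [Real.GammaSeq]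
    rw [Real.log_div (by positivity) hprodpos.ne']
    rw [Real.log_mul (by positivity) (by positivity : ((Nat.factorial N : ℕ):ℝ) ≠ 0)]
    rw [Real.log_rpow hN0]
    rw [hfact, Real.log_prod (fun n _ => by positivity)]
    rw [Real.log_prod (fun j _ => by positivity)]
    rw [Finset.sum_range_succ' (fun j => Real.log (a + (j:ℝ))) N]
    have hc1 : (∑ i ∈ Finset.range N, Real.log (a + ((i + 1 : ℕ) : ℝ)))
        = ∑ n ∈ Finset.range N, Real.log (a + ((n:ℝ) + 1)) := by
      apply Finset.sum_congr rfl
      intro i _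
      norm_num
    rw [hc1]
    norm_num
    ring
  have hcomm : (∑ n ∈ Finset.range N, Real.log ((n:ℝ) + 1 + a))
      = ∑ n ∈ Finset.range N, Real.log (a + ((n:ℝ) + 1)) := by
    apply Finset.sum_congr rfl
    intro n _
    rw [show (n:ℝ) + 1 + a = a + ((n:ℝ) + 1) by ring]
  rw [hlogGS, harmonic_cast, Finset.sum_add_distrib, Finset.sum_sub_distrib,
    ← Finset.mul_sum, hcomm]
  ring

lemma Gd_zero {a : ℝ} (ha0 : 0 < a) (ha1 : a ≤ 1) :
    Gd a 0 = ((Real.log (Real.Gamma a) + Real.log a + a * γ : ℝ) : ℂ) := by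
  have hsum : Summable (fun n : ℕ => gd a ((n:ℝ) + 1) 0) :=
    gd_summable ha0.le ha1 (R := 1) (by norm_num) (by norm_num)
  have htendC : Tendsto (fun N => ∑ n ∈ Finset.range N, gd a ((n:ℝ) + 1) 0) atTop
      (𝓝 (Gd a 0)) := hsum.hasSum.tendsto_sum_nat
  set L : ℝ := Real.log (Real.Gamma a) + Real.log a + a * γ with hL
  have hTcast : ∀ N : ℕ, (∑ n ∈ Finset.range N, gd a ((n:ℝ) + 1) 0)
      = ((∑ n ∈ Finset.range N,
        (Real.log ((n:ℝ) + 1) - Real.log ((n:ℝ) + 1 + a) + a * ((n:ℝ) + 1)⁻¹) : ℝ) : ℂ) := by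
    intro N
    push_cast
    apply Finset.sum_congr rfl
    intro n _
    rw [gd_zero_eq (by positivity : (0:ℝ) < (n:ℝ) + 1)]
    push_cast
    ring
  have hTlim : Tendsto (fun N : ℕ => ∑ n ∈ Finset.range N,
      (Real.log ((n:ℝ) + 1) - Real.log ((n:ℝ) + 1 + a) + a * ((n:ℝ) + 1)⁻¹)) atTop (𝓝 L) := by
    have h1 : Tendsto (fun N : ℕ => Real.log (Real.GammaSeq a N)) atTop
        (𝓝 (Real.log (Real.Gamma a))) := by
      exact ((Real.continuousAt_log (Real.Gamma_pos_of_pos ha0).ne').tendsto).comp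
        (Real.GammaSeq_tendsto_Gamma a)
    have h2 : Tendsto (fun N : ℕ => ((harmonic N : ℚ) : ℝ) - Real.log N) atTop (𝓝 γ) := by
      apply Real.tendsto_eulerMascheroniSeq'.congr'
      filter_upwards [eventually_ge_atTop 1] with N hN
      rw [Real.eulerMascheroniSeq', if_neg (by omega)]
    have h3 : Tendsto (fun N : ℕ => Real.log (Real.GammaSeq a N) + Real.log a
        + a * (((harmonic N : ℚ) : ℝ) - Real.log N)) atTop
        (𝓝 (Real.log (Real.Gamma a) + Real.log a + a * γ)) :=
      (h1.add (tendsto_const_nhds : Tendsto (fun _ : ℕ => Real.log a) atTop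
        (𝓝 (Real.log a)))).add (h2.const_mul a)
    rw [hL]
    apply h3.congr'
    filter_upwards [eventually_ge_atTop 1] with N hN
    exact (T_eq ha0 hN).symm
  have htendC2 : Tendsto (fun N => ∑ n ∈ Finset.range N, gd a ((n:ℝ) + 1) 0) atTop
      (𝓝 ((L : ℝ) : ℂ)) := by
    have := (Complex.continuous_ofReal.tendsto L).comp hTlim
    apply this.congr
    intro N
    rw [Function.comp_apply, hTcast N]
  exact tendsto_nhds_unique htendC htendC2

section MAIN
variable {a : ℝ}

lemma ev_eq (ha0 : 0 < a) (ha1 : a ≤ 1) :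
    (fun z => hurwitzZeta (a : UnitAddCircle) z) =ᶠ[𝓝[≠] (0:ℂ)] RHS a := by
  have hball : Metric.ball (0:ℂ) (1/4) ∈ 𝓝[≠] (0:ℂ) :=
    nhdsWithin_le_nhds (Metric.ball_mem_nhds 0 (by norm_num))
  filter_upwards [hball, self_mem_nhdsWithin] with z hz hz0
  exact identity_near_zero ha0 ha1 (by simpa [Metric.mem_ball] using hz) hz0

lemma tendsto_zeta_shift :
    Tendsto (fun z : ℂ => riemannZeta (z + 1) - 1/z) (𝓝[≠] (0:ℂ)) (𝓝 ((γ : ℝ) : ℂ)) := by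
  have hmap : Tendsto (fun z : ℂ => z + 1) (𝓝[≠] (0:ℂ)) (𝓝[≠] (1:ℂ)) := by
    rw [tendsto_nhdsWithin_iff]
    constructor
    · have : Tendsto (fun z : ℂ => z + 1) (𝓝 0) (𝓝 (0 + 1)) :=
        (continuous_add_right (1:ℂ)).tendsto 0
      simpa using this.mono_left nhdsWithin_le_nhds
    · filter_upwards [self_mem_nhdsWithin] with z hz
      simp only [mem_compl_iff, mem_singleton_iff]
      intro h
      exact hz (mem_singleton_iff.mpr (by linear_combination h))
  have := tendsto_riemannZeta_sub_one_div.comp hmap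
  apply this.congr
  intro z
  simp only [Function.comp_apply]
  congr 2
  ring

lemma tendsto_azzeta (ha0 : 0 < a) :
    Tendsto (fun z : ℂ => (a:ℂ) * z * riemannZeta (z + 1)) (𝓝[≠] (0:ℂ)) (𝓝 (a:ℂ)) := by
  have h1 : Tendsto (fun z : ℂ => z * (riemannZeta (z + 1) - 1/z) + 1) (𝓝[≠] (0:ℂ))
      (𝓝 ((0:ℂ) * ((γ : ℝ) : ℂ) + 1)) :=
    ((tendsto_id.mono_left nhdsWithin_le_nhds).mul tendsto_zeta_shift).add tendsto_const_nhds
  have h2 : Tendsto (fun z : ℂ => z * riemannZeta (z + 1)) (𝓝[≠] (0:ℂ)) (𝓝 1) := by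
    have hfun : (fun z : ℂ => z * (riemannZeta (z + 1) - 1/z) + 1)
        =ᶠ[𝓝[≠] (0:ℂ)] (fun z : ℂ => z * riemannZeta (z + 1)) := by
      filter_upwards [self_mem_nhdsWithin] with z hz
      have hz' : (z:ℂ) ≠ 0 := hz
      rw [mul_sub, mul_one_div, div_self hz']
      ring
    have h3 := h1.congr' hfun
    simpa using h3
  have := h2.const_mul (a:ℂ)
  simp only [mul_one] at this
  apply this.congr
  intro z
  ring

lemma hurwitzZeta_val_zero (ha0 : 0 < a) (ha1 : a ≤ 1) :
    hurwitzZeta (a : UnitAddCircle) 0 = 1/2 - a := by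
  have hdiff : DifferentiableAt ℂ (hurwitzZeta (a : UnitAddCircle)) 0 :=
    differentiableAt_hurwitzZeta _ (by norm_num)
  have hcont : Tendsto (fun z => hurwitzZeta (a : UnitAddCircle) z) (𝓝[≠] (0:ℂ))
      (𝓝 (hurwitzZeta (a : UnitAddCircle) 0)) :=
    hdiff.continuousAt.tendsto.mono_left nhdsWithin_le_nhds
  have t1 : Tendsto (fun z : ℂ => P (-z) a) (𝓝[≠] (0:ℂ)) (𝓝 1) := by
    have hder := hasDerivAt_P_neg a 0
    have := hder.continuousAt.tendsto.mono_left (nhdsWithin_le_nhds (s := {(0:ℂ)}ᶜ))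
    rwa [show (-0 : ℂ) = 0 by ring, P_zero] at this
  have t2 : Tendsto riemannZeta (𝓝[≠] (0:ℂ)) (𝓝 (-1/2)) := by
    have := (differentiableAt_riemannZeta (by norm_num : (0:ℂ) ≠ 1)).continuousAt.tendsto
    rw [riemannZeta_zero] at this
    exact this.mono_left nhdsWithin_le_nhds
  have t4 : Tendsto (fun z => G a z) (𝓝[≠] (0:ℂ)) (𝓝 0) := by
    have := (G_hasDerivAt ha0 ha1 (by norm_num : -(1/2:ℝ) < (0:ℂ).re)).continuousAt.tendsto
    rw [G_zero] at this
    exact this.mono_left nhdsWithin_le_nhds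
  have hTR : Tendsto (RHS a) (𝓝[≠] (0:ℂ)) (𝓝 (1 + (-1/2) - a + 0)) :=
    ((t1.add t2).sub (tendsto_azzeta ha0)).add t4
  have hH : Tendsto (fun z => hurwitzZeta (a : UnitAddCircle) z) (𝓝[≠] (0:ℂ))
      (𝓝 (1 + (-1/2) - a + 0)) := hTR.congr' (ev_eq ha0 ha1).symm
  have := tendsto_nhds_unique hcont hH
  rw [this]
  ring

lemma hurwitzZeta_hasDerivAt_zero (ha0 : 0 < a) (ha1 : a ≤ 1) :
    HasDerivAt (hurwitzZeta (a : UnitAddCircle))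
      (((Real.log (Real.Gamma a) : ℝ) : ℂ) - ((Real.log (2 * Real.pi) : ℝ) : ℂ) / 2) 0 := by
  have hdiff : DifferentiableAt ℂ (hurwitzZeta (a : UnitAddCircle)) 0 :=
    differentiableAt_hurwitzZeta _ (by norm_num)
  have hdH := hdiff.hasDerivAt
  have hslope := hasDerivAt_iff_tendsto_slope.mp hdH
  -- the four competing slope limits
  have u1 : Tendsto (slope (fun z : ℂ => P (-z) a) 0) (𝓝[≠] (0:ℂ))
      (𝓝 (-(Real.log a : ℂ))) := by
    have hder := hasDerivAt_P_neg a 0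
    rw [show (-0 : ℂ) = 0 by ring, P_zero, mul_one] at hder
    exact hasDerivAt_iff_tendsto_slope.mp hder
  have u2 : Tendsto (slope riemannZeta 0) (𝓝[≠] (0:ℂ))
      (𝓝 (-((Real.log (2 * Real.pi) : ℝ) : ℂ) / 2)) :=
    hasDerivAt_iff_tendsto_slope.mp zeta_hasDerivAt_zero
  have u3 := tendsto_zeta_shift
  have u4 : Tendsto (slope (G a) 0) (𝓝[≠] (0:ℂ)) (𝓝 (Gd a 0)) :=
    hasDerivAt_iff_tendsto_slope.mp
      (G_hasDerivAt ha0 ha1 (by norm_num : -(1/2:ℝ) < (0:ℂ).re))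
  have hbig : Tendsto (fun z : ℂ => slope (fun z : ℂ => P (-z) a) 0 z + slope riemannZeta 0 z
      - (a:ℂ) * (riemannZeta (z + 1) - 1/z) + slope (G a) 0 z) (𝓝[≠] (0:ℂ))
      (𝓝 (-(Real.log a : ℂ) + -((Real.log (2 * Real.pi) : ℝ) : ℂ) / 2
        - (a:ℂ) * ((γ : ℝ) : ℂ) + Gd a 0)) :=
    ((u1.add u2).sub (u3.const_mul (a:ℂ))).add u4
  have hev : (fun z : ℂ => slope (fun z : ℂ => P (-z) a) 0 z + slope riemannZeta 0 z
      - (a:ℂ) * (riemannZeta (z + 1) - 1/z) + slope (G a) 0 z)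
      =ᶠ[𝓝[≠] (0:ℂ)] slope (hurwitzZeta (a : UnitAddCircle)) 0 := by
    filter_upwards [ev_eq ha0 ha1, self_mem_nhdsWithin] with z hz hz0
    have hz0' : z ≠ 0 := hz0
    simp only [slope_def_field]
    rw [hz, RHS, hurwitzZeta_val_zero ha0 ha1, riemannZeta_zero, G_zero,
      show (-0:ℂ) = 0 by ring, P_zero]
    have hz4 : (↑a : ℂ) * (riemannZeta (z + 1) - 1/z)
        = ((↑a * z * riemannZeta (z + 1) - ↑a)) / z := by
      field_simp
    rw [hz4]
    simp only [sub_zero]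
    rw [← add_div, ← sub_div, ← add_div]
    congr 1
    ring
  have hslope2 := hbig.congr' hev
  have hder := tendsto_nhds_unique hslope hslope2
  rw [Gd_zero ha0 ha1] at hder
  have hfin : deriv (hurwitzZeta (a : UnitAddCircle)) 0
      = ((Real.log (Real.Gamma a) : ℝ) : ℂ) - ((Real.log (2 * Real.pi) : ℝ) : ℂ) / 2 := by
    rw [hder]
    push_cast
    ring
  rw [← hfin]
  exact hdH

end MAIN

end LerchAux

/-- Proposition 2.24, eq. (2.32): the zeta-regularized determinant
`det_∞(s/(2π) − Φ_2/(2π))` equals `Γ_ℂ(s−1)^{-b_2}`, where `Φ_2` has spectrum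
`{n ∈ ℤ : n ≤ 1}`, each eigenvalue of multiplicity `b = b_2`, so that its zeta function is
`b (2π)^z (ζ_H(s, z) + (s − 1)^{−z})`. -/
theorem regularized_det_Phi_two (b : ℕ) (hb : 0 < b) (s : ℝ) (hs0 : 0 < s) (hs1 : s < 1) :
    Complex.exp (- deriv (fun z : ℂ =>
        (b : ℂ) * ((2 * Real.pi : ℝ) : ℂ) ^ z *
          (hurwitzZeta (s : UnitAddCircle) z + ((s : ℂ) - 1) ^ (-z))) 0) =
      (((2 * Real.pi : ℝ) : ℂ) ^ ((s : ℂ) - 1) / Complex.Gamma ((s : ℂ) - 1)) ^ b := by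
  have h2pi : (0:ℝ) < 2 * Real.pi := by positivity
  have h2piC : ((2 * Real.pi : ℝ) : ℂ) ≠ 0 := Complex.ofReal_ne_zero.mpr h2pi.ne'
  have hc0 : ((s:ℂ) - 1) ≠ 0 := by
    intro h
    have := congrArg Complex.re h
    simp only [Complex.sub_re, Complex.ofReal_re, Complex.one_re, Complex.zero_re] at this
    linarith
  set lc : ℂ := Complex.log ((s:ℂ) - 1) with hlc
  set l2 : ℂ := ((Real.log (2 * Real.pi) : ℝ) : ℂ) with hl2
  have hfun : (fun z : ℂ => (b : ℂ) * ((2 * Real.pi : ℝ) : ℂ) ^ z *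
        (hurwitzZeta (s : UnitAddCircle) z + ((s : ℂ) - 1) ^ (-z)))
      = fun z : ℂ => ((b : ℂ) * Complex.exp (l2 * z)) *
        (hurwitzZeta (s : UnitAddCircle) z + Complex.exp (lc * (-z))) := by
    funext z
    rw [cpow_def_of_ne_zero h2piC z, cpow_def_of_ne_zero hc0 (-z),
      ← Complex.ofReal_log h2pi.le]
  rw [hfun]
  -- derivatives
  have hH := hurwitzZeta_hasDerivAt_zero hs0 hs1.le
  have hexp2 : HasDerivAt (fun z : ℂ => Complex.exp (lc * (-z))) (-lc) 0 := by
    have h1 : HasDerivAt (fun z : ℂ => lc * (-z)) (-lc) 0 := by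
      simpa using ((hasDerivAt_id (0:ℂ)).neg.const_mul lc)
    have h2 := h1.cexp
    simpa using h2
  have hf1 : HasDerivAt (fun z : ℂ => (b : ℂ) * Complex.exp (l2 * z)) ((b:ℂ) * l2) 0 := by
    have h1 : HasDerivAt (fun z : ℂ => Complex.exp (l2 * z)) l2 0 := by
      have := ((hasDerivAt_id (0:ℂ)).const_mul l2).cexp
      simpa using this
    simpa using h1.const_mul (b:ℂ)
  have hprod := hf1.fun_mul (hH.fun_add hexp2)
  rw [hprod.deriv]
  -- value simplifications
  rw [hurwitzZeta_val_zero hs0 hs1.le]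
  have hYeq : -((b:ℂ) * l2 * ((1/2 - (s:ℂ)) + Complex.exp (lc * (-0)))
        + (b:ℂ) * Complex.exp (l2 * 0) *
          ((((Real.log (Real.Gamma s) : ℝ) : ℂ) - ((Real.log (2 * Real.pi) : ℝ) : ℂ) / 2) + -lc))
      = (b:ℂ) * (l2 * ((s:ℂ) - 1) + lc - ((Real.log (Real.Gamma s) : ℝ) : ℂ)) := by
    rw [show lc * (-0 : ℂ) = 0 by ring, show l2 * (0:ℂ) = 0 by ring, Complex.exp_zero, hl2]
    ring
  rw [hYeq, Complex.exp_nat_mul]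
  congr 1
  rw [show l2 * ((s:ℂ) - 1) + lc - ((Real.log (Real.Gamma s) : ℝ) : ℂ)
      = (l2 * ((s:ℂ) - 1) + lc) - ((Real.log (Real.Gamma s) : ℝ) : ℂ) from rfl,
    Complex.exp_sub, Complex.exp_add]
  rw [hlc, Complex.exp_log hc0]
  rw [← Complex.ofReal_exp, Real.exp_log (Real.Gamma_pos_of_pos hs0)]
  rw [cpow_def_of_ne_zero h2piC ((s:ℂ) - 1), ← Complex.ofReal_log h2pi.le]
  -- now reduce to the Gamma recurrence
  have hΓs : ((s:ℂ) - 1) * Complex.Gamma ((s:ℂ) - 1) = ((Real.Gamma s : ℝ) : ℂ) := by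
    have h1 := Complex.Gamma_add_one ((s:ℂ) - 1) hc0
    rw [show (s:ℂ) - 1 + 1 = ((s:ℝ) : ℂ) by ring] at h1
    rw [← h1, Complex.Gamma_ofReal]
  have hΓne : Complex.Gamma ((s:ℂ) - 1) ≠ 0 := by
    apply Complex.Gamma_ne_zero
    intro m h
    have hre := congrArg Complex.re h
    simp only [Complex.sub_re, Complex.ofReal_re, Complex.one_re, Complex.neg_re,
      Complex.natCast_re] at hre
    rcases Nat.eq_zero_or_pos m with rfl | hm
    · simp at hre; linarith
    · have : (1:ℝ) ≤ m := by exact_mod_cast hm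
      linarith
  have hΓR : ((Real.Gamma s : ℝ) : ℂ) ≠ 0 :=
    Complex.ofReal_ne_zero.mpr (Real.Gamma_pos_of_pos hs0).ne'
  field_simp
  rw [mul_comm ((s:ℂ) - 1) (((Real.log (2 * Real.pi) : ℝ) : ℂ)), ← hl2]
  linear_combination Complex.exp (l2 * ((s:ℂ) - 1)) * hΓs
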